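/- Let ⊩ be a one-dimensional consequence relation over a signature containing the binary connective ∨, and suppose its Set-Fmla companion ⊢ satisfies the disjunction property (Disj): Γ ∪ {φ ∨ ψ} ⊢ χ iff Γ ∪ {φ} ⊢ χ and Γ ∪ {ψ} ⊢ χ. If a Set-Set Hilbert system H satisfies ⊢_H = ⊩, then there exists a Set-Fmla Hilbert system H' with ⊢_{H'} equal to the Set-Fmla companion ⊢ of ⊩, and H' is finite whenever H is finite. -/

import Mathlib

/-- Formulas over the signature Σ with unary ¬, ∘ and binary ∧, ∨, →,
freely generated from a denumerable set of propositional variables. -/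
inductive Fm : Type where
  | var : ℕ → Fm
  | neg : Fm → Fm
  | circ : Fm → Fm
  | conj : Fm → Fm → Fm
  | disj : Fm → Fm → Fm
  | imp : Fm → Fm → Fm
deriving DecidableEq

/-- Substitutions act homomorphically on formulas. -/
def subst (σ : ℕ → Fm) : Fm → Fm
  | .var n => σ n
  | .neg φ => .neg (subst σ φ)
  | .circ φ => .circ (subst σ φ)
  | .conj φ ψ => .conj (subst σ φ) (subst σ ψ)
  | .disj φ ψ => .disj (subst σ φ) (subst σ ψ)
  | .imp φ ψ => .imp (subst σ φ) (subst σ ψ)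

/-- A Set-Fmla rule schema: a finite antecedent and a single succedent formula. -/
abbrev Rule : Type := Finset Fm × Fm

/-- Derivability in a Set-Fmla Hilbert system: `Derives H Γ φ` holds iff φ can be
obtained from members of Γ by finitely many applications of substitution instances
of rules of `H`. -/
inductive Derives (H : Set Rule) : Set Fm → Fm → Prop where
  | prem : ∀ {Γ : Set Fm} {φ : Fm}, φ ∈ Γ → Derives H Γ φ
  | rule : ∀ {Γ : Set Fm} (r : Rule) (σ : ℕ → Fm), r ∈ H →
      (∀ ψ ∈ r.1, Derives H Γ (subst σ ψ)) → Derives H Γ (subst σ r.2)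

/-- A Set-Set rule schema: a finite antecedent and a finite succedent. -/
abbrev RuleSS : Type := Finset Fm × Finset Fm

/-- Derivability in a Set-Set Hilbert system (inductive rendering of the
tree-style derivations): a branch closes when the current label meets the
succedent `Δ`, and applying a rule instance whose antecedent is contained in the
current label opens one branch per formula of its succedent (none when the
succedent is empty, corresponding to a ∗-discontinued branch). -/
inductive DerSS (H : Set RuleSS) : Set Fm → Set Fm → Prop where
  | close : ∀ {Γ Δ : Set Fm} {φ : Fm}, φ ∈ Γ → φ ∈ Δ → DerSS H Γ Δ
  | rule : ∀ {Γ Δ : Set Fm} (r : RuleSS) (σ : ℕ → Fm), r ∈ H →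
      (∀ ψ ∈ r.1, subst σ ψ ∈ Γ) →
      (∀ ω ∈ r.2, DerSS H (Γ ∪ {subst σ ω}) Δ) → DerSS H Γ Δ

/-- A one-dimensional (Set-Set) consequence relation: overlap, dilution and cut. -/
def OneDimCR (R : Set Fm → Set Fm → Prop) : Prop :=
  (∀ Γ Δ : Set Fm, (Γ ∩ Δ).Nonempty → R Γ Δ) ∧
  (∀ Γ Γ' Δ Δ' : Set Fm, R Γ Δ → R (Γ ∪ Γ') (Δ ∪ Δ')) ∧
  (∀ Γ Δ : Set Fm, (∀ Ω : Set Fm, R (Ω ∪ Γ) (Δ ∪ Ωᶜ)) → R Γ Δ)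

/-! ### Auxiliary material for Statement 15 -/

namespace SS15

/-- Free variables of a formula. -/
def fv : Fm → Finset ℕ
  | .var n => {n}
  | .neg φ => fv φ
  | .circ φ => fv φ
  | .conj φ ψ => fv φ ∪ fv ψ
  | .disj φ ψ => fv φ ∪ fv ψ
  | .imp φ ψ => fv φ ∪ fv ψ

lemma subst_id : ∀ φ : Fm, subst Fm.var φ = φ
  | .var n => rfl
  | .neg φ => by simp [subst, subst_id φ]
  | .circ φ => by simp [subst, subst_id φ]
  | .conj φ ψ => by simp [subst, subst_id φ, subst_id ψ]
  | .disj φ ψ => by simp [subst, subst_id φ, subst_id ψ]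
  | .imp φ ψ => by simp [subst, subst_id φ, subst_id ψ]

lemma subst_comp (τ σ : ℕ → Fm) : ∀ φ : Fm,
    subst τ (subst σ φ) = subst (fun n => subst τ (σ n)) φ
  | .var n => rfl
  | .neg φ => by simp [subst, subst_comp τ σ φ]
  | .circ φ => by simp [subst, subst_comp τ σ φ]
  | .conj φ ψ => by simp [subst, subst_comp τ σ φ, subst_comp τ σ ψ]
  | .disj φ ψ => by simp [subst, subst_comp τ σ φ, subst_comp τ σ ψ]
  | .imp φ ψ => by simp [subst, subst_comp τ σ φ, subst_comp τ σ ψ]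

lemma subst_congr (σ σ' : ℕ → Fm) : ∀ φ : Fm,
    (∀ n ∈ fv φ, σ n = σ' n) → subst σ φ = subst σ' φ
  | .var n, h => h n (by simp [fv])
  | .neg φ, h => by simp [subst, subst_congr σ σ' φ (fun n hn => h n (by simpa [fv] using hn))]
  | .circ φ, h => by simp [subst, subst_congr σ σ' φ (fun n hn => h n (by simpa [fv] using hn))]
  | .conj φ ψ, h => by
      simp [subst, subst_congr σ σ' φ (fun n hn => h n (by simp [fv]; exact Or.inl hn)),
        subst_congr σ σ' ψ (fun n hn => h n (by simp [fv]; exact Or.inr hn))]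
  | .disj φ ψ, h => by
      simp [subst, subst_congr σ σ' φ (fun n hn => h n (by simp [fv]; exact Or.inl hn)),
        subst_congr σ σ' ψ (fun n hn => h n (by simp [fv]; exact Or.inr hn))]
  | .imp φ ψ, h => by
      simp [subst, subst_congr σ σ' φ (fun n hn => h n (by simp [fv]; exact Or.inl hn)),
        subst_congr σ σ' ψ (fun n hn => h n (by simp [fv]; exact Or.inr hn))]

/-- Iterated disjunction with final member `θ`. -/
def big (l : List Fm) (θ : Fm) : Fm := l.foldr Fm.disj θ

@[simp] lemma big_nil (θ : Fm) : big [] θ = θ := rfl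
@[simp] lemma big_cons (x : Fm) (l : List Fm) (θ : Fm) :
    big (x :: l) θ = Fm.disj x (big l θ) := rfl

lemma subst_big (σ : ℕ → Fm) : ∀ (l : List Fm) (θ : Fm),
    subst σ (big l θ) = big (l.map (subst σ)) (subst σ θ)
  | [], θ => rfl
  | x :: l, θ => by
      simp only [big_cons, List.map_cons, subst]
      exact congrArg _ (subst_big σ l θ)

/-- A fresh variable for a Set-Set rule. -/
def Qr (r : RuleSS) : ℕ := (r.1 ∪ r.2).sup (fun f => (fv f).sup Nat.succ)

lemma Qr_not_mem {r : RuleSS} {f : Fm} (hf : f ∈ r.1 ∪ r.2) : Qr r ∉ fv f := by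
  intro hmem
  have h1 : (fv f).sup Nat.succ ≤ Qr r := Finset.le_sup (f := fun f => (fv f).sup Nat.succ) hf
  have h2 : Nat.succ (Qr r) ≤ (fv f).sup Nat.succ := Finset.le_sup hmem
  omega

/-- The translation of a Set-Set rule into a Set-Fmla rule. -/
noncomputable def transRule (r : RuleSS) : Rule :=
  (r.1.image (fun a => Fm.disj a (Fm.var (Qr r))), big r.2.toList (Fm.var (Qr r)))

def rK1 : Rule := ({.var 0}, .disj (.var 0) (.var 1))
def rK2 : Rule := ({.var 1}, .disj (.var 0) (.var 1))
def rCtr : Rule := ({.disj (.var 0) (.var 0)}, .var 0)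
def rICtr : Rule := ({.disj (.var 0) (.disj (.var 0) (.var 1))}, .disj (.var 0) (.var 1))
def rExch : Rule := ({.disj (.var 0) (.disj (.var 1) (.var 2))},
    .disj (.var 1) (.disj (.var 0) (.var 2)))
def rW : Rule := ({.disj (.var 0) (.var 2)}, .disj (.var 0) (.disj (.var 1) (.var 2)))

def fixedRules : Set Rule := {rK1, rK2, rCtr, rICtr, rExch, rW}

lemma fixedRules_finite : fixedRules.Finite := by
  unfold fixedRules
  exact (Set.finite_singleton _).insert _ |>.insert _ |>.insert _ |>.insert _ |>.insert _

end SS15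
namespace SS15

section CR
variable {R : Set Fm → Set Fm → Prop}

lemma Rmono (hR : OneDimCR R) {Γ Γ' Δ Δ' : Set Fm} (h : R Γ Δ)
    (h1 : Γ ⊆ Γ') (h2 : Δ ⊆ Δ') : R Γ' Δ' := by
  have := hR.2.1 Γ Γ' Δ Δ' h
  rwa [Set.union_eq_right.2 h1, Set.union_eq_right.2 h2] at this

lemma Rov (hR : OneDimCR R) {Γ Δ : Set Fm} {φ : Fm} (h1 : φ ∈ Γ) (h2 : φ ∈ Δ) : R Γ Δ :=
  hR.1 _ _ ⟨φ, h1, h2⟩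

/-- Cut with a set on the right (against a single succedent). -/
lemma Rcut1 (hR : OneDimCR R) {Γ Δ : Set Fm} {χ : Fm} (h : R Γ Δ)
    (hδ : ∀ δ ∈ Δ, R (Γ ∪ {δ}) {χ}) : R Γ {χ} := by
  apply hR.2.2
  intro Ω
  by_cases hc : ∃ δ ∈ Δ, δ ∈ Ω
  · obtain ⟨δ, hδΔ, hδΩ⟩ := hc
    refine Rmono hR (hδ δ hδΔ) ?_ Set.subset_union_left
    intro x hx
    rcases hx with hx | hx
    · exact Or.inr hx
    · exact Or.inl (by rwa [Set.mem_singleton_iff.1 hx])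
  · push_neg at hc
    refine Rmono hR h Set.subset_union_right ?_
    intro x hx
    exact Or.inr (hc x hx)

/-- Cut with a set on the left. -/
lemma Rcut2 (hR : OneDimCR R) {Γ S : Set Fm} {χ : Fm} (h : R (Γ ∪ S) {χ})
    (hs : ∀ s ∈ S, R Γ {s}) : R Γ {χ} := by
  apply hR.2.2
  intro Ω
  by_cases hc : ∃ s ∈ S, s ∉ Ω
  · obtain ⟨s, hsS, hsΩ⟩ := hc
    refine Rmono hR (hs s hsS) Set.subset_union_right ?_
    intro x hx
    exact Or.inr (by rwa [Set.mem_singleton_iff.1 hx])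
  · push_neg at hc
    refine Rmono hR h ?_ Set.subset_union_left
    intro x hx
    rcases hx with hx | hx
    · exact Or.inr hx
    · exact Or.inl (hc x hx)

/-- Any disjunct entails the whole iterated disjunction. -/
lemma disjIn (hR : OneDimCR R) (hDisj : ∀ (Γ : Set Fm) (φ ψ χ : Fm),
      R (Γ ∪ {Fm.disj φ ψ}) {χ} ↔ R (Γ ∪ {φ}) {χ} ∧ R (Γ ∪ {ψ}) {χ}) :
    ∀ (l : List Fm) (θ δ : Fm) (Γ : Set Fm), (δ ∈ l ∨ δ = θ) →
      R (Γ ∪ {δ}) {big l θ}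
  | [], θ, δ, Γ, h => by
      rcases h with h | h
      · simp at h
      · subst h; exact Rov hR (Set.mem_union_right _ rfl) rfl
  | x :: l, θ, δ, Γ, h => by
      have hov : R ((Γ ∪ {δ}) ∪ {Fm.disj x (big l θ)}) {big (x :: l) θ} :=
        Rov hR (Set.mem_union_right _ rfl) (by simp [big_cons])
      have h2 := (hDisj (Γ ∪ {δ}) x (big l θ) (big (x :: l) θ)).mp hov
      by_cases hx : δ = x
      · subst hx
        have := h2.1
        rwa [Set.union_assoc, Set.union_self] at this
      · have hδ' : δ ∈ l ∨ δ = θ := by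
          rcases h with h | h
          · rcases List.mem_cons.1 h with h | h
            · exact absurd h hx
            · exact Or.inl h
          · exact Or.inr h
        refine Rcut2 hR (S := {big l θ}) ?_ ?_
        · exact h2.2
        · intro s hs
          rw [Set.mem_singleton_iff.1 hs]
          exact disjIn hR hDisj l θ δ Γ hδ'

/-- Disjoining all premises with θ. -/
lemma disjPrem (hR : OneDimCR R) (hDisj : ∀ (Γ : Set Fm) (φ ψ χ : Fm),
      R (Γ ∪ {Fm.disj φ ψ}) {χ} ↔ R (Γ ∪ {φ}) {χ} ∧ R (Γ ∪ {ψ}) {χ}) :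
    ∀ (l : List Fm) (Γ : Set Fm) (θ χ : Fm),
      R (Γ ∪ {x | x ∈ l}) {χ} → R (Γ ∪ {θ}) {χ} →
      R (Γ ∪ {y | ∃ x ∈ l, y = Fm.disj x θ}) {χ}
  | [], Γ, θ, χ, h1, _ => by
      have e : ({y | ∃ x ∈ ([] : List Fm), y = Fm.disj x θ} : Set Fm) = ∅ := by
        ext y; simp
      rw [e, Set.union_empty]
      have e2 : ({x | x ∈ ([] : List Fm)} : Set Fm) = ∅ := by ext y; simp
      rwa [e2, Set.union_empty] at h1
  | x :: l, Γ, θ, χ, h1, h2 => by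
      have key : R ((Γ ∪ {y | ∃ a ∈ l, y = Fm.disj a θ}) ∪ {Fm.disj x θ}) {χ} := by
        refine (hDisj _ x θ χ).mpr ⟨?_, ?_⟩
        · have := disjPrem hR hDisj l (Γ ∪ {x}) θ χ ?_ ?_
          · refine Rmono hR this ?_ subset_rfl
            intro y hy
            rcases hy with hy | hy
            · rcases hy with hy | hy
              · exact Or.inl (Or.inl hy)
              · exact Or.inr hy
            · exact Or.inl (Or.inr hy)
          · refine Rmono hR h1 ?_ subset_rfl
            intro y hy
            rcases hy with hy | hy
            · exact Or.inl (Or.inl hy)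
            · rcases List.mem_cons.1 hy with hy | hy
              · exact Or.inl (Or.inr (Set.mem_singleton_iff.2 hy))
              · exact Or.inr hy
          · exact Rmono hR h2 (Set.union_subset_union_left _ Set.subset_union_left) subset_rfl
        · refine Rmono hR h2 ?_ subset_rfl
          intro y hy
          rcases hy with hy | hy
          · exact Or.inl (Or.inl hy)
          · exact Or.inr hy
      refine Rmono hR key ?_ subset_rfl
      intro y hy
      rcases hy with hy | hy
      · rcases hy with hy | hy
        · exact Or.inl hy
        · obtain ⟨a, ha, rfl⟩ := hy
          exact Or.inr ⟨a, List.mem_cons_of_mem _ ha, rfl⟩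
      · exact Or.inr ⟨x, List.mem_cons_self, Set.mem_singleton_iff.1 hy⟩

end CR

section Der

variable {H : Set RuleSS} {H' : Set Rule}

lemma DerSS_subst {Γ Δ : Set Fm} (h : DerSS H Γ Δ) (τ : ℕ → Fm) :
    DerSS H (subst τ '' Γ) (subst τ '' Δ) := by
  induction h with
  | close hΓ hΔ =>
      exact .close (Set.mem_image_of_mem _ hΓ) (Set.mem_image_of_mem _ hΔ)
  | rule r σ hr hant hch ih =>
      refine .rule r (fun n => subst τ (σ n)) hr ?_ ?_
      · intro ψ hψ
        rw [← subst_comp]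
        exact Set.mem_image_of_mem _ (hant ψ hψ)
      · intro ω hω
        have := ih ω hω
        rwa [Set.image_union, Set.image_singleton, subst_comp] at this

lemma DerSS_self {r : RuleSS} (hr : r ∈ H) : DerSS H ↑r.1 ↑r.2 := by
  refine .rule r Fm.var hr ?_ ?_
  · intro ψ hψ; rw [subst_id]; exact_mod_cast hψ
  · intro ω hω
    exact .close (φ := subst Fm.var ω) (Set.mem_union_right _ rfl)
      (by rw [subst_id]; exact_mod_cast hω)

lemma Derives_mono {Γ Γ' : Set Fm} {φ : Fm} (h : Derives H' Γ φ) (hs : Γ ⊆ Γ') :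
    Derives H' Γ' φ := by
  induction h with
  | prem hm => exact .prem (hs hm)
  | rule r σ hr hyp ih => exact .rule r σ hr ih

lemma Derives_cut {Γ : Set Fm} {ψ φ : Fm} (hψ : Derives H' Γ ψ)
    (h : Derives H' (Γ ∪ {ψ}) φ) : Derives H' Γ φ := by
  have key : ∀ {Γ₁ : Set Fm} {χ : Fm}, Derives H' Γ₁ χ → Γ₁ ⊆ Γ ∪ {ψ} → Derives H' Γ χ := by
    intro Γ₁ χ hd
    induction hd with
    | prem hm =>
        intro hsub
        rcases hsub hm with h' | h'
        · exact .prem h'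
        · rwa [Set.mem_singleton_iff.1 h']
    | rule r σ hr hyp ih =>
        intro hsub
        exact .rule r σ hr (fun a ha => ih a ha hsub)
  exact key h subset_rfl

lemma applySingle {a c : Fm} (hmem : ((({a} : Finset Fm), c) : Rule) ∈ H') (σ : ℕ → Fm)
    {Γ : Set Fm} (h : Derives H' Γ (subst σ a)) : Derives H' Γ (subst σ c) :=
  Derives.rule ({a}, c) σ hmem (by
    intro ψ hψ
    rw [Finset.mem_singleton] at hψ
    exact hψ ▸ h)

end Der

end SS15
namespace SS15

section Sound
variable {R : Set Fm → Set Fm → Prop} {H : Set RuleSS}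
variable (hR : OneDimCR R)
variable (hDisj : ∀ (Γ : Set Fm) (φ ψ χ : Fm),
      R (Γ ∪ {Fm.disj φ ψ}) {χ} ↔ R (Γ ∪ {φ}) {χ} ∧ R (Γ ∪ {ψ}) {χ})
variable (hH : ∀ Γ Δ : Set Fm, DerSS H Γ Δ ↔ R Γ Δ)

include hR hDisj

/-- `δ ∈ {p} ∪ ... ` single-premise soundness facts. -/
lemma sIn {δ : Fm} {l : List Fm} {θ : Fm} (h : δ ∈ l ∨ δ = θ) :
    R {δ} {big l θ} := by
  have := disjIn hR hDisj l θ δ ∅ h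
  rwa [Set.empty_union] at this

lemma sK1 (p q : Fm) : R {p} {Fm.disj p q} :=
  sIn hR hDisj (l := [p]) (θ := q) (Or.inl (by simp))

lemma sK2 (p q : Fm) : R {q} {Fm.disj p q} :=
  sIn hR hDisj (l := [p]) (θ := q) (Or.inr rfl)

omit hR in
lemma hDisj0 (φ ψ χ : Fm) :
    R {Fm.disj φ ψ} {χ} ↔ R {φ} {χ} ∧ R {ψ} {χ} := by
  have := hDisj ∅ φ ψ χ
  simpa [Set.empty_union] using this

lemma sCtr (p : Fm) : R {Fm.disj p p} {p} :=
  (hDisj0 hDisj p p p).mpr ⟨Rov hR rfl rfl, Rov hR rfl rfl⟩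

lemma sICtr (p q : Fm) : R {Fm.disj p (Fm.disj p q)} {Fm.disj p q} :=
  (hDisj0 hDisj _ _ _).mpr ⟨sK1 hR hDisj p q, Rov hR rfl rfl⟩

lemma sExch (p q r : Fm) :
    R {Fm.disj p (Fm.disj q r)} {Fm.disj q (Fm.disj p r)} := by
  refine (hDisj0 hDisj _ _ _).mpr ⟨?_, ?_⟩
  · exact sIn hR hDisj (l := [q, p]) (θ := r) (Or.inl (by simp))
  · refine (hDisj0 hDisj _ _ _).mpr ⟨?_, ?_⟩
    · exact sIn hR hDisj (l := [q, p]) (θ := r) (Or.inl (by simp))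
    · exact sIn hR hDisj (l := [q, p]) (θ := r) (Or.inr rfl)

lemma sW (p q r : Fm) : R {Fm.disj p r} {Fm.disj p (Fm.disj q r)} := by
  refine (hDisj0 hDisj _ _ _).mpr ⟨?_, ?_⟩
  · exact sIn hR hDisj (l := [p, q]) (θ := r) (Or.inl (by simp))
  · exact sIn hR hDisj (l := [p, q]) (θ := r) (Or.inr rfl)

include hH

lemma transSound (r : RuleSS) (hr : r ∈ H) (σ : ℕ → Fm) :
    R (subst σ '' ↑(transRule r).1) {subst σ (transRule r).2} := by
  set θ₀ := σ (Qr r) with hθ₀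
  set LB := r.2.toList.map (subst σ) with hLB
  have hRAB : R (subst σ '' ↑r.1) (subst σ '' ↑r.2) :=
    (hH _ _).mp (DerSS_subst (DerSS_self hr) σ)
  have hE0 : R (subst σ '' ↑r.1) {big LB θ₀} := by
    refine Rcut1 hR hRAB ?_
    intro δ hδ
    obtain ⟨b, hb, rfl⟩ := hδ
    refine disjIn hR hDisj LB θ₀ _ _ (Or.inl ?_)
    rw [hLB, List.mem_map]
    exact ⟨b, by simpa [Finset.mem_toList] using hb, rfl⟩
  set lA := r.1.toList.map (subst σ) with hlA
  have h1 : R ((∅ : Set Fm) ∪ {x | x ∈ lA}) {big LB θ₀} := by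
    refine Rmono hR hE0 ?_ subset_rfl
    intro y hy
    obtain ⟨a, ha, rfl⟩ := hy
    refine Or.inr ?_
    rw [hlA]
    simp only [Set.mem_setOf_eq, List.mem_map]
    exact ⟨a, by simpa [Finset.mem_toList] using ha, rfl⟩
  have h2 : R ((∅ : Set Fm) ∪ {θ₀}) {big LB θ₀} :=
    disjIn hR hDisj LB θ₀ θ₀ ∅ (Or.inr rfl)
  have h3 := disjPrem hR hDisj lA ∅ θ₀ (big LB θ₀) h1 h2
  rw [Set.empty_union] at h3
  have econc : subst σ (transRule r).2 = big LB θ₀ := by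
    show subst σ (big r.2.toList (Fm.var (Qr r))) = big LB θ₀
    rw [subst_big]
    rfl
  rw [econc]
  refine Rmono hR h3 ?_ subset_rfl
  intro y hy
  obtain ⟨x, hx, rfl⟩ := hy
  rw [hlA, List.mem_map] at hx
  obtain ⟨a, ha, rfl⟩ := hx
  refine ⟨Fm.disj a (Fm.var (Qr r)), ?_, by simp [subst, hθ₀]⟩
  show _ ∈ ↑(r.1.image (fun a => Fm.disj a (Fm.var (Qr r))))
  exact_mod_cast Finset.mem_image_of_mem _ (by simpa [Finset.mem_toList] using ha)

end Sound

end SS15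
namespace SS15

section DerHelpers
variable {H' : Set Rule} {Γ₀ : Set Fm}

lemma dK1 (h : rK1 ∈ H') (p q : Fm) (hp : Derives H' Γ₀ p) :
    Derives H' Γ₀ (Fm.disj p q) := by
  have := applySingle (a := Fm.var 0) (c := Fm.disj (Fm.var 0) (Fm.var 1)) h
    (fun n => if n = 0 then p else q) (by simpa [subst] using hp)
  simpa [subst] using this

lemma dK2 (h : rK2 ∈ H') (p q : Fm) (hp : Derives H' Γ₀ q) :
    Derives H' Γ₀ (Fm.disj p q) := by
  have := applySingle (a := Fm.var 1) (c := Fm.disj (Fm.var 0) (Fm.var 1)) h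
    (fun n => if n = 0 then p else q) (by simpa [subst] using hp)
  simpa [subst] using this

lemma dCtr (h : rCtr ∈ H') (p : Fm) (hp : Derives H' Γ₀ (Fm.disj p p)) :
    Derives H' Γ₀ p := by
  have := applySingle (a := Fm.disj (Fm.var 0) (Fm.var 0)) (c := Fm.var 0) h
    (fun _ => p) (by simpa [subst] using hp)
  simpa [subst] using this

lemma dICtr (h : rICtr ∈ H') (p q : Fm)
    (hp : Derives H' Γ₀ (Fm.disj p (Fm.disj p q))) :
    Derives H' Γ₀ (Fm.disj p q) := by
  have := applySingle (a := Fm.disj (Fm.var 0) (Fm.disj (Fm.var 0) (Fm.var 1)))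
    (c := Fm.disj (Fm.var 0) (Fm.var 1)) h
    (fun n => if n = 0 then p else q) (by simpa [subst] using hp)
  simpa [subst] using this

lemma dExch (h : rExch ∈ H') (p q r : Fm)
    (hp : Derives H' Γ₀ (Fm.disj p (Fm.disj q r))) :
    Derives H' Γ₀ (Fm.disj q (Fm.disj p r)) := by
  have := applySingle (a := Fm.disj (Fm.var 0) (Fm.disj (Fm.var 1) (Fm.var 2)))
    (c := Fm.disj (Fm.var 1) (Fm.disj (Fm.var 0) (Fm.var 2))) h
    (fun n => if n = 0 then p else if n = 1 then q else r) (by simpa [subst] using hp)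
  simpa [subst] using this

lemma dW (h : rW ∈ H') (p q r : Fm) (hp : Derives H' Γ₀ (Fm.disj p r)) :
    Derives H' Γ₀ (Fm.disj p (Fm.disj q r)) := by
  have := applySingle (a := Fm.disj (Fm.var 0) (Fm.var 2))
    (c := Fm.disj (Fm.var 0) (Fm.disj (Fm.var 1) (Fm.var 2))) h
    (fun n => if n = 0 then p else if n = 1 then q else r) (by simpa [subst] using hp)
  simpa [subst] using this

lemma dWfold (hW : rW ∈ H') : ∀ (l : List Fm) (γ θ : Fm),
    Derives H' Γ₀ (Fm.disj γ θ) → Derives H' Γ₀ (Fm.disj γ (big l θ))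
  | [], _, _, h => h
  | x :: l, γ, θ, h => by
      have := dWfold hW l γ θ h
      simpa using dW hW γ x (big l θ) this

lemma peel (hEx : rExch ∈ H') (hIC : rICtr ∈ H') (hW : rW ∈ H')
    (Γ Γ₀ : Set Fm) (φ θ : Fm)
    (hγ : ∀ γ ∈ Γ, Derives H' Γ₀ (Fm.disj γ θ)) :
    ∀ l : List Fm,
      (∀ d ∈ l, ∀ (θ' : Fm) (Γ₀' : Set Fm),
          (∀ γ ∈ Γ ∪ {d}, Derives H' Γ₀' (Fm.disj γ θ')) →
          Derives H' Γ₀' (Fm.disj φ θ')) →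
      Derives H' Γ₀ (Fm.disj φ (big l θ)) → Derives H' Γ₀ (Fm.disj φ θ)
  | [], _, hder => hder
  | d :: l, hIH, hder => by
      have step1 : Derives H' Γ₀ (Fm.disj d (Fm.disj φ (big l θ))) :=
        dExch hEx φ d (big l θ) (by simpa using hder)
      have step2 : Derives H' Γ₀ (Fm.disj φ (Fm.disj φ (big l θ))) := by
        refine hIH d (by simp) (Fm.disj φ (big l θ)) Γ₀ ?_
        intro γ hγm
        rcases hγm with hγm | hγm
        · have := dWfold hW (φ :: l) γ θ (hγ γ hγm)
          simpa using this
        · rw [Set.mem_singleton_iff.1 hγm]; exact step1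
      have step3 : Derives H' Γ₀ (Fm.disj φ (big l θ)) := dICtr hIC φ (big l θ) step2
      exact peel hEx hIC hW Γ Γ₀ φ θ hγ l
        (fun d' hd' => hIH d' (List.mem_cons_of_mem _ hd')) step3

end DerHelpers

section Compl
variable {H : Set RuleSS} {H' : Set Rule}

lemma compl (hT : ∀ r ∈ H, transRule r ∈ H') (hk2 : rK2 ∈ H')
    (hEx : rExch ∈ H') (hIC : rICtr ∈ H') (hW : rW ∈ H')
    {Γ' Δ' : Set Fm} (hd : DerSS H Γ' Δ') :
    ∀ φ : Fm, Δ' = {φ} → ∀ (θ : Fm) (Γ₀ : Set Fm),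
      (∀ γ ∈ Γ', Derives H' Γ₀ (Fm.disj γ θ)) → Derives H' Γ₀ (Fm.disj φ θ) := by
  induction hd with
  | @close Γ Δ ψ hΓ hΔ =>
      intro φ hΔeq θ Γ₀ hγ
      subst hΔeq
      have e := Set.mem_singleton_iff.1 hΔ
      exact e ▸ hγ _ hΓ
  | @rule Γ Δ r σ hr hant hch ih =>
      intro φ hΔeq θ Γ₀ hγ
      set σ' := Function.update σ (Qr r) θ with hσ'
      have hfresh1 : ∀ a ∈ r.1, subst σ' a = subst σ a := by
        intro a ha
        refine subst_congr _ _ a (fun n hn => ?_)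
        have hne : n ≠ Qr r := fun he =>
          Qr_not_mem (Finset.mem_union_left _ ha) (he ▸ hn)
        simp [hσ', Function.update_apply, hne]
      have hfresh2 : ∀ b ∈ r.2, subst σ' b = subst σ b := by
        intro b hb
        refine subst_congr _ _ b (fun n hn => ?_)
        have hne : n ≠ Qr r := fun he =>
          Qr_not_mem (Finset.mem_union_right _ hb) (he ▸ hn)
        simp [hσ', Function.update_apply, hne]
      have hconc : Derives H' Γ₀ (subst σ' (transRule r).2) := by
        refine .rule (transRule r) σ' (hT r hr) ?_
        intro ψ hψ
        have hψ' : ψ ∈ r.1.image (fun a => Fm.disj a (Fm.var (Qr r))) := hψ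
        rw [Finset.mem_image] at hψ'
        obtain ⟨a, ha, rfl⟩ := hψ'
        have e : subst σ' (Fm.disj a (Fm.var (Qr r))) = Fm.disj (subst σ a) θ := by
          simp only [subst]; rw [hfresh1 a ha]; simp [hσ']
        rw [e]
        exact hγ _ (hant a ha)
      set L := r.2.toList.map (subst σ) with hL
      have econc : subst σ' (transRule r).2 = big L θ := by
        show subst σ' (big r.2.toList (Fm.var (Qr r))) = big L θ
        rw [subst_big]
        have el : r.2.toList.map (subst σ') = L := by
          rw [hL]
          exact List.map_congr_left
            (fun b hb => hfresh2 b (by simpa [Finset.mem_toList] using hb))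
        rw [el]
        have : subst σ' (Fm.var (Qr r)) = θ := by simp [subst, hσ']
        rw [this]
      rw [econc] at hconc
      have hstart : Derives H' Γ₀ (Fm.disj φ (big L θ)) := dK2 hk2 φ _ hconc
      refine peel hEx hIC hW Γ Γ₀ φ θ hγ L ?_ hstart
      intro d hd' θ' Γ₀' hcond
      rw [hL, List.mem_map] at hd'
      obtain ⟨ω, hω, rfl⟩ := hd'
      exact ih ω (by simpa [Finset.mem_toList] using hω) φ hΔeq θ' Γ₀' hcond

end Compl

end SS15
/-- Shoesmith–Smiley: if the Set-Fmla companion of a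
one-dimensional consequence relation satisfies (Disj), then any Set-Set Hilbert
system axiomatizing it may be converted into a Set-Fmla Hilbert system for the
companion which is finite whenever the original system is finite. -/
theorem stmt15 (R : Set Fm → Set Fm → Prop) (hR : OneDimCR R)
    (hDisj : ∀ (Γ : Set Fm) (φ ψ χ : Fm),
      R (Γ ∪ {Fm.disj φ ψ}) {χ} ↔ R (Γ ∪ {φ}) {χ} ∧ R (Γ ∪ {ψ}) {χ})
    (H : Set RuleSS) (hH : ∀ Γ Δ : Set Fm, DerSS H Γ Δ ↔ R Γ Δ) :
    ∃ H' : Set Rule,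
      (∀ (Γ : Set Fm) (φ : Fm), Derives H' Γ φ ↔ R Γ {φ}) ∧
      (H.Finite → H'.Finite) := by
  classical
  set H' : Set Rule := (SS15.transRule '' H) ∪ SS15.fixedRules with hH'
  have hk1 : SS15.rK1 ∈ H' := Or.inr (by simp [SS15.fixedRules])
  have hk2 : SS15.rK2 ∈ H' := Or.inr (by simp [SS15.fixedRules])
  have hCtr : SS15.rCtr ∈ H' := Or.inr (by simp [SS15.fixedRules])
  have hIC : SS15.rICtr ∈ H' := Or.inr (by simp [SS15.fixedRules])
  have hEx : SS15.rExch ∈ H' := Or.inr (by simp [SS15.fixedRules])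
  have hW : SS15.rW ∈ H' := Or.inr (by simp [SS15.fixedRules])
  have hT : ∀ r ∈ H, SS15.transRule r ∈ H' := fun r hr => Or.inl ⟨r, hr, rfl⟩
  refine ⟨H', ?_, ?_⟩
  · intro Γ φ
    constructor
    · intro h
      induction h with
      | prem hm => exact hR.1 _ _ ⟨_, hm, rfl⟩
      | rule r' σ hr' hyp ih =>
          have hs : R (subst σ '' ↑r'.1) {subst σ r'.2} := by
            rcases hr' with h' | h'
            · obtain ⟨r, hr, rfl⟩ := h'
              exact SS15.transSound hR hDisj hH r hr σ
            · simp only [SS15.fixedRules, Set.mem_insert_iff, Set.mem_singleton_iff] at h'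
              rcases h' with rfl | rfl | rfl | rfl | rfl | rfl
              · simpa [SS15.rK1, subst] using SS15.sK1 hR hDisj (σ 0) (σ 1)
              · simpa [SS15.rK2, subst] using SS15.sK2 hR hDisj (σ 0) (σ 1)
              · simpa [SS15.rCtr, subst] using SS15.sCtr hR hDisj (σ 0)
              · simpa [SS15.rICtr, subst] using SS15.sICtr hR hDisj (σ 0) (σ 1)
              · simpa [SS15.rExch, subst] using SS15.sExch hR hDisj (σ 0) (σ 1) (σ 2)
              · simpa [SS15.rW, subst] using SS15.sW hR hDisj (σ 0) (σ 1) (σ 2)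
          refine SS15.Rcut2 hR (S := subst σ '' ↑r'.1) ?_ ?_
          · exact SS15.Rmono hR hs Set.subset_union_right subset_rfl
          · intro s hs'
            obtain ⟨ψ, hψ, rfl⟩ := hs'
            exact ih ψ hψ
    · intro hRφ
      have hd : DerSS H Γ {φ} := (hH Γ {φ}).mpr hRφ
      have h1 := SS15.compl hT hk2 hEx hIC hW hd φ rfl φ Γ
        (fun γ hγ => SS15.dK1 hk1 γ φ (Derives.prem hγ))
      exact SS15.dCtr hCtr φ h1
  · intro hfin
    exact (hfin.image _).union SS15.fixedRules_finite
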